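/- arXiv:1411.1539 — 4 statements merged into one kernel-verified Lean document; each statement's English description precedes it below -/
import Mathlib

section
/- Let F : ℝ² → ℂ be continuous and satisfy F(x, ω+1) = F(x,ω) and F(x+1, ω) = e^{2πiω} F(x,ω) for all (x,ω) ∈ ℝ². Then F has a zero in [0,1) × [0,1). -/
open Complex Set

/-- Telescoping: exponential of sum of logs of successive ratios. -/
lemma tele_exp (f : ℕ → ℂ) (hf : ∀ j, f j ≠ 0) (n : ℕ) :
    Complex.exp (∑ j ∈ Finset.range n, Complex.log (f (j+1) / f j)) = f n / f 0 := by
  induction n with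
  | zero => simp [div_self (hf 0)]
  | succ n ih =>
      rw [Finset.sum_range_succ, Complex.exp_add, ih,
        Complex.exp_log (div_ne_zero (hf (n+1)) (hf n))]
      rw [div_mul_div_comm, mul_comm (f n) (f (n+1)), mul_div_mul_right _ _ (hf n)]

/-- A continuous function on a preconnected set with values in `2πiℤ` takes equal values. -/
lemma const_of_int {s : Set (ℝ × ℝ)} (hs : IsPreconnected s) {f : ℝ × ℝ → ℂ}
    (hf : ContinuousOn f s)
    (hint : ∀ p ∈ s, ∃ n : ℤ, f p = (n : ℂ) * (2 * Real.pi * Complex.I))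
    {p q : ℝ × ℝ} (hp : p ∈ s) (hq : q ∈ s) : f p = f q := by
  set g : ℝ × ℝ → ℝ := fun r => (f r).im with hg
  have hgc : ContinuousOn g s := Complex.continuous_im.comp_continuousOn hf
  have hgval : ∀ r ∈ s, ∃ n : ℤ, g r = n * (2 * Real.pi) := by
    intro r hr
    obtain ⟨n, hn⟩ := hint r hr
    exact ⟨n, by simp [hg, hn]⟩
  have key : ∀ a ∈ s, ∀ b ∈ s, ¬ (g a < g b) := by
    intro a ha b hb hab
    obtain ⟨na, hna⟩ := hgval a ha
    obtain ⟨nb, hnb⟩ := hgval b hb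
    have hpi : (0:ℝ) < Real.pi := Real.pi_pos
    have hlt : na < nb := by
      by_contra hc
      push_neg at hc
      have : (nb:ℝ) ≤ na := by exact_mod_cast hc
      nlinarith [hna, hnb, hab]
    have hmem : (na : ℝ) * (2 * Real.pi) + Real.pi ∈ Set.Icc (g a) (g b) := by
      constructor
      · nlinarith
      · have : (na:ℝ) + 1 ≤ nb := by exact_mod_cast hlt
        nlinarith
    obtain ⟨r, hr, hrval⟩ := hs.intermediate_value ha hb hgc hmem
    obtain ⟨k, hk⟩ := hgval r hr
    rw [hk] at hrval
    have hzero : ((2*(k:ℝ) - (2*(na:ℝ)+1))) * Real.pi = 0 := by linear_combination hrval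
    rcases mul_eq_zero.mp hzero with h | h
    swap
    · exact Real.pi_ne_zero h
    have : (2*k : ℝ) = 2*na + 1 := by linarith
    have : (2*k : ℤ) = 2*na + 1 := by exact_mod_cast this
    omega
  have him : (f p).im = (f q).im := le_antisymm
    (not_lt.mp (key q hq p hp)) (not_lt.mp (key p hp q hq))
  obtain ⟨np, hnp⟩ := hint p hp
  obtain ⟨nq, hnq⟩ := hint q hq
  have hpi : (0:ℝ) < Real.pi := Real.pi_pos
  have : (np:ℝ) * (2*Real.pi) = nq * (2*Real.pi) := by
    have h1 : (f p).im = np * (2*Real.pi) := by simp [hnp]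
    have h2 : (f q).im = nq * (2*Real.pi) := by simp [hnq]
    rw [h1, h2] at him; exact him
  have : (np:ℝ) = nq := mul_right_cancel₀ (by positivity : (2*Real.pi) ≠ 0) this
  have : np = nq := by exact_mod_cast this
  rw [hnp, hnq, this]

/-- Existence of a continuous logarithm on a closed ball for a nonvanishing continuous map. -/
lemma exists_log (F : ℝ × ℝ → ℂ) (hF : Continuous F) (hne : ∀ p, F p ≠ 0) :
    ∃ G : ℝ × ℝ → ℂ, ContinuousOn G (Metric.closedBall (0 : ℝ × ℝ) 4) ∧
      ∀ p ∈ Metric.closedBall (0 : ℝ × ℝ) 4, Complex.exp (G p) = F p := by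
  set K : Set (ℝ × ℝ) := Metric.closedBall 0 4 with hK
  have hKc : IsCompact K := isCompact_closedBall _ _
  have hKne : K.Nonempty := ⟨0, by simp [hK]⟩
  -- minimum of ‖F‖ on K
  obtain ⟨p₀, hp₀, hmin⟩ := hKc.exists_isMinOn hKne (hF.norm.continuousOn)
  set m : ℝ := ‖F p₀‖ with hm
  have hmpos : 0 < m := norm_pos_iff.mpr (hne p₀)
  have hmle : ∀ q ∈ K, m ≤ ‖F q‖ := fun q hq => hmin hq
  -- uniform continuity
  have huc := (hKc.uniformContinuousOn_of_continuous hF.continuousOn)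
  rw [Metric.uniformContinuousOn_iff] at huc
  obtain ⟨δ, hδ, hucd⟩ := huc m hmpos
  -- choose N
  obtain ⟨N, hN⟩ := exists_nat_gt (4 / δ)
  have hNpos : (0:ℝ) < N := lt_of_le_of_lt (by positivity) hN
  have hN4 : 4 / (N:ℝ) < δ := by
    rw [div_lt_iff₀ hNpos]
    have h := mul_lt_mul_of_pos_right hN hδ
    rw [div_mul_cancel₀ _ (ne_of_gt hδ)] at h
    linarith
  -- scaled points
  set c : ℕ → (ℝ × ℝ) → (ℝ × ℝ) := fun j p => ((j : ℝ)/(N:ℝ)) • p with hc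
  have hcK : ∀ (j : ℕ), j ≤ N → ∀ p ∈ K, c j p ∈ K := by
    intro j hj p hp
    rw [hK, mem_closedBall_zero_iff] at *
    rw [hc]
    simp only [norm_smul, Real.norm_eq_abs]
    have h1 : |(j:ℝ)/(N:ℝ)| ≤ 1 := by
      rw [abs_div, _root_.abs_of_nonneg (by positivity : (0:ℝ) ≤ (j:ℝ)),
        _root_.abs_of_nonneg (le_of_lt hNpos), div_le_one hNpos]
      exact_mod_cast hj
    calc |(j:ℝ)/(N:ℝ)| * ‖p‖ ≤ 1 * ‖p‖ := by
          exact mul_le_mul_of_nonneg_right h1 (norm_nonneg _)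
      _ ≤ 4 := by rwa [one_mul]
  have hclose : ∀ (j : ℕ), ∀ p ∈ K, dist (c (j+1) p) (c j p) < δ := by
    intro j p hp
    rw [hK, mem_closedBall_zero_iff] at hp
    have : c (j+1) p - c j p = ((1:ℝ)/(N:ℝ)) • p := by
      rw [hc]; simp only; rw [← sub_smul]
      congr 1
      push_cast
      field_simp
      ring
    rw [dist_eq_norm, this, norm_smul, Real.norm_eq_abs,
      abs_of_pos (by positivity : (0:ℝ) < 1/(N:ℝ))]
    calc 1/(N:ℝ) * ‖p‖ ≤ 1/(N:ℝ) * 4 := by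
          exact mul_le_mul_of_nonneg_left hp (by positivity)
      _ = 4 / (N:ℝ) := by ring
      _ < δ := hN4
  -- the ratios lie in the ball of radius 1 around 1
  have hratio : ∀ (j : ℕ), j < N → ∀ p ∈ K,
      ‖F (c (j+1) p) / F (c j p) - 1‖ < 1 := by
    intro j hj p hp
    have h1 : c (j+1) p ∈ K := hcK (j+1) (by omega) p hp
    have h2 : c j p ∈ K := hcK j (by omega) p hp
    have hd := hucd _ h1 _ h2 (hclose j p hp)
    rw [Complex.dist_eq] at hd
    have hF2 : F (c j p) ≠ 0 := hne _
    have : F (c (j+1) p) / F (c j p) - 1 = (F (c (j+1) p) - F (c j p)) / F (c j p) := by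
      field_simp
    rw [this, norm_div]
    rw [div_lt_one (norm_pos_iff.mpr hF2)]
    calc ‖F (c (j+1) p) - F (c j p)‖ < m := hd
      _ ≤ ‖F (c j p)‖ := hmle _ h2
  set G : (ℝ × ℝ) → ℂ := fun p =>
    Complex.log (F 0) + ∑ j ∈ Finset.range N,
      Complex.log (F (c (j+1) p) / F (c j p)) with hG
  refine ⟨G, ?_, ?_⟩
  · apply ContinuousOn.add continuousOn_const
    apply continuousOn_finset_sum
    intro j hj
    rw [Finset.mem_range] at hj
    have hcc : ∀ (i : ℕ), ContinuousOn (fun p => F (c i p)) K :=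
      fun i => (hF.comp (continuous_const_smul _)).continuousOn
    apply ContinuousOn.clog
    · exact (hcc (j+1)).div (hcc j) (fun p hp => hne _)
    · intro p hp
      rw [Complex.mem_slitPlane_iff]
      left
      have hz := hratio j hj p hp
      set z : ℂ := F (c (j+1) p) / F (c j p) with hzdef
      have h1 : |z.re - 1| ≤ ‖z - 1‖ := by
        have := Complex.abs_re_le_norm (z - 1)
        rw [Complex.sub_re, Complex.one_re] at this
        simpa using this
      have h2 : |z.re - 1| < 1 := lt_of_le_of_lt h1 hz
      have := abs_lt.mp h2
      linarith [this.1]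
  · intro p hp
    rw [hG]
    rw [Complex.exp_add, Complex.exp_log (hne 0)]
    have := tele_exp (fun j => F (c j p)) (fun j => hne _) N
    rw [this]
    have h0 : c 0 p = 0 := by rw [hc]; simp
    have hNN : c N p = p := by
      rw [hc]; simp only
      rw [div_self (ne_of_gt hNpos), one_smul]
    rw [h0, hNN, mul_comm]
    exact div_mul_cancel₀ _ (hne 0)

/-- A continuous function `F : ℝ² → ℂ` that is `1`-periodic in the second variable
and quasi-periodic in the first variable must vanish somewhere in `[0,1) × [0,1)`. -/
theorem quasiperiodic_has_zero
    (F : ℝ × ℝ → ℂ) (hF : Continuous F)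
    (hper : ∀ x ω : ℝ, F (x, ω + 1) = F (x, ω))
    (hqper : ∀ x ω : ℝ, F (x + 1, ω) = Complex.exp (2 * Real.pi * Complex.I * ω) * F (x, ω)) :
    ∃ p ∈ Set.Ico (0:ℝ) 1 ×ˢ Set.Ico (0:ℝ) 1, F p = 0 := by
  by_contra hcon
  push_neg at hcon
  -- vertical periodicity over ℤ
  have hvert : ∀ (n : ℤ) (x ω : ℝ), F (x, ω + n) = F (x, ω) := by
    intro n
    induction n using Int.induction_on with
    | zero => intro x ω; simp
    | succ k ih =>
        intro x ω
        have h1 : ω + ((k:ℤ)+1 : ℤ) = (ω + k) + 1 := by push_cast; ring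
        rw [h1, hper]
        exact_mod_cast ih x ω
    | pred k ih =>
        intro x ω
        have h1 : (ω + (-(k:ℤ)-1 : ℤ)) + 1 = ω + (-(k:ℤ) : ℤ) := by push_cast; ring
        have := hper x (ω + ((-(k:ℤ)-1 : ℤ) : ℝ))
        rw [h1] at this
        rw [← this, ih]
  -- horizontal quasi-periodicity over ℤ
  have hhor : ∀ (n : ℤ) (x ω : ℝ), F (x + n, ω) = 0 ↔ F (x, ω) = 0 := by
    intro n
    induction n using Int.induction_on with
    | zero => intro x ω; simp
    | succ k ih =>
        intro x ω
        have h1 : x + ((k:ℤ)+1 : ℤ) = (x + k) + 1 := by push_cast; ring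
        rw [h1, hqper]
        simp only [mul_eq_zero, Complex.exp_ne_zero, false_or]
        exact_mod_cast ih x ω
    | pred k ih =>
        intro x ω
        have h1 : (x + (-(k:ℤ)-1 : ℤ)) + 1 = x + (-(k:ℤ) : ℤ) := by push_cast; ring
        have h2 := hqper (x + ((-(k:ℤ)-1 : ℤ) : ℝ)) ω
        rw [h1] at h2
        constructor
        · intro h
          exact (ih x ω).mp (by rw [h2, h, mul_zero])
        · intro h
          have h3 : F (x + (-(k:ℤ) : ℤ), ω) = 0 := (ih x ω).mpr h
          rw [h3] at h2
          exact (mul_eq_zero.mp h2.symm).resolve_left (Complex.exp_ne_zero _)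
  -- F never vanishes
  have hne : ∀ p, F p ≠ 0 := by
    rintro ⟨x, ω⟩ h
    have hx : Int.fract x + (⌊x⌋ : ℝ) = x := Int.fract_add_floor x
    have hω : Int.fract ω + (⌊ω⌋ : ℝ) = ω := Int.fract_add_floor ω
    have h1 : F (Int.fract x, ω) = 0 := by
      rw [← hhor ⌊x⌋ (Int.fract x) ω, hx]; exact h
    have h2 : F (Int.fract x, Int.fract ω) = 0 := by
      have := hvert ⌊ω⌋ (Int.fract x) (Int.fract ω)
      rw [hω] at this
      rw [← this]; exact h1
    exact hcon (Int.fract x, Int.fract ω)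
      ⟨⟨Int.fract_nonneg x, Int.fract_lt_one x⟩,
       ⟨Int.fract_nonneg ω, Int.fract_lt_one ω⟩⟩ h2
  -- continuous logarithm on the closed ball
  obtain ⟨G, hGc, hGexp⟩ := exists_log F hF hne
  set K : Set (ℝ × ℝ) := Metric.closedBall 0 4 with hKdef
  set Q : Set (ℝ × ℝ) := Set.Icc (0:ℝ) 1 ×ˢ Set.Icc (0:ℝ) 1 with hQdef
  have hQpre : IsPreconnected Q := ((convex_Icc (0:ℝ) 1).prod (convex_Icc (0:ℝ) 1)).isPreconnected
  have hK' : ∀ u v : ℝ, |u| ≤ 2 → |v| ≤ 2 → ((u, v) : ℝ × ℝ) ∈ K := by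
    intro u v hu hv
    rw [hKdef, mem_closedBall_zero_iff, Prod.norm_def]
    exact sup_le (by simpa [Real.norm_eq_abs] using hu.trans (by norm_num))
      (by simpa [Real.norm_eq_abs] using hv.trans (by norm_num))
  have hQbounds : ∀ p ∈ Q, 0 ≤ p.1 ∧ p.1 ≤ 1 ∧ 0 ≤ p.2 ∧ p.2 ≤ 1 := by
    rintro ⟨u, v⟩ ⟨⟨h1, h2⟩, ⟨h3, h4⟩⟩
    exact ⟨h1, h2, h3, h4⟩
  have hQK0 : ∀ p ∈ Q, p ∈ K := by
    intro p hp
    obtain ⟨h1, h2, h3, h4⟩ := hQbounds p hp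
    have := hK' p.1 p.2 (by rw [abs_le]; constructor <;> linarith)
      (by rw [abs_le]; constructor <;> linarith)
    simpa using this
  have hQK1 : ∀ p ∈ Q, ((p.1 + 1, p.2) : ℝ × ℝ) ∈ K := by
    intro p hp
    obtain ⟨h1, h2, h3, h4⟩ := hQbounds p hp
    exact hK' _ _ (by rw [abs_le]; constructor <;> linarith)
      (by rw [abs_le]; constructor <;> linarith)
  have hQK2 : ∀ p ∈ Q, ((p.1, p.2 + 1) : ℝ × ℝ) ∈ K := by
    intro p hp
    obtain ⟨h1, h2, h3, h4⟩ := hQbounds p hp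
    exact hK' _ _ (by rw [abs_le]; constructor <;> linarith)
      (by rw [abs_le]; constructor <;> linarith)
  -- the two jump functions
  set a : ℝ × ℝ → ℂ := fun p => G (p.1 + 1, p.2) - G p - 2 * (Real.pi:ℂ) * Complex.I * (p.2:ℂ)
    with hadef
  set b : ℝ × ℝ → ℂ := fun p => G (p.1, p.2 + 1) - G p with hbdef
  have hshift1 : Continuous (fun p : ℝ × ℝ => ((p.1 + 1, p.2) : ℝ × ℝ)) :=
    (continuous_fst.add continuous_const).prodMk continuous_snd
  have hshift2 : Continuous (fun p : ℝ × ℝ => ((p.1, p.2 + 1) : ℝ × ℝ)) :=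
    continuous_fst.prodMk (continuous_snd.add continuous_const)
  have hac : ContinuousOn a Q := by
    apply ContinuousOn.sub
    · exact (hGc.comp hshift1.continuousOn hQK1).sub (hGc.mono hQK0)
    · exact (continuous_const.mul
        (Complex.continuous_ofReal.comp continuous_snd)).continuousOn
  have hbc : ContinuousOn b Q :=
    (hGc.comp hshift2.continuousOn hQK2).sub (hGc.mono hQK0)
  have haint : ∀ p ∈ Q, ∃ n : ℤ, a p = (n:ℂ) * (2 * Real.pi * Complex.I) := by
    intro p hp
    rw [← Complex.exp_eq_one_iff]
    have h1 : a p = G (p.1 + 1, p.2) - (G p + 2 * (Real.pi:ℂ) * Complex.I * (p.2:ℂ)) := by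
      rw [hadef]; ring
    rw [h1, Complex.exp_sub, Complex.exp_add, hGexp _ (hQK1 p hp), hGexp _ (hQK0 p hp),
      hqper p.1 p.2]
    rw [mul_comm (F p)]
    exact div_self (mul_ne_zero (Complex.exp_ne_zero _) (hne p))
  have hbint : ∀ p ∈ Q, ∃ n : ℤ, b p = (n:ℂ) * (2 * Real.pi * Complex.I) := by
    intro p hp
    rw [← Complex.exp_eq_one_iff]
    rw [hbdef]
    simp only
    rw [Complex.exp_sub, hGexp _ (hQK2 p hp), hGexp _ (hQK0 p hp), hper p.1 p.2]
    exact div_self (hne p)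
  have h00 : ((0:ℝ), (0:ℝ)) ∈ Q := by constructor <;> constructor <;> norm_num
  have h01 : ((0:ℝ), (1:ℝ)) ∈ Q := by constructor <;> constructor <;> norm_num
  have h10 : ((1:ℝ), (0:ℝ)) ∈ Q := by constructor <;> constructor <;> norm_num
  have ha := const_of_int hQpre hac haint h01 h00
  have hb := const_of_int hQpre hbc hbint h10 h00
  rw [hadef] at ha
  rw [hbdef] at hb
  simp only [Complex.ofReal_one, Complex.ofReal_zero, mul_one, mul_zero, sub_zero] at ha hb
  norm_num at ha hb
  have hzero : (2 * (Real.pi:ℂ) * Complex.I) = 0 := by linear_combination hb - ha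
  have : (2 * (Real.pi:ℂ) * Complex.I) ≠ 0 :=
    mul_ne_zero (mul_ne_zero two_ne_zero (Complex.ofReal_ne_zero.mpr Real.pi_ne_zero))
      Complex.I_ne_zero
  exact this hzero
end

section
/- Let a ≠ 0 and g₁(x) = |a|·e^{-ax}·χ_{[0,∞)}(sign(a)·x). Then for every N ∈ ℕ and all real numbers x₁ < … < x_N and y₁ < … < y_N, the matrix (g₁(x_j - y_k))_{j,k=1}^N has nonnegative determinant; i.e., the one-sided exponential is a totally positive function. -/
open Finset

lemma staircase_det_nonneg {N : ℕ} (P : Fin N → Fin N → Prop) [∀ j k, Decidable (P j k)]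
    (hcol : ∀ j : Fin N, ∀ {k k' : Fin N}, k' ≤ k → P j k → P j k')
    (hrow : ∀ {j j' : Fin N}, ∀ k : Fin N, j ≤ j' → P j k → P j' k) :
    0 ≤ (Matrix.of fun j k : Fin N => if P j k then (1:ℝ) else 0).det := by
  set m : Fin N → ℕ := fun j => (Finset.filter (P j) Finset.univ).card with hm
  have key : ∀ j k, P j k ↔ (k : ℕ) < m j := by
    intro j k
    constructor
    · intro h
      have hsub : Finset.Iic k ⊆ Finset.filter (P j) Finset.univ := by
        intro k' hk'
        simp only [Finset.mem_Iic] at hk'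
        simp only [Finset.mem_filter, Finset.mem_univ, true_and]
        exact hcol j hk' h
      have := Finset.card_le_card hsub
      rw [Fin.card_Iic] at this
      have hmj : m j = (Finset.filter (P j) Finset.univ).card := rfl
      omega
    · intro h
      by_contra hP
      have hsub : Finset.filter (P j) Finset.univ ⊆ Finset.Iio k := by
        intro k' hk'
        simp only [Finset.mem_filter, Finset.mem_univ, true_and] at hk'
        simp only [Finset.mem_Iio]
        by_contra hle
        exact hP (hcol j (le_of_not_gt hle) hk')
      have := Finset.card_le_card hsub
      rw [Fin.card_Iio] at this
      have hmj : m j = (Finset.filter (P j) Finset.univ).card := rfl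
      omega
  have hmono : Monotone m := by
    intro j j' hjj'
    exact Finset.card_le_card (fun k hk => by
      simp only [Finset.mem_filter, Finset.mem_univ, true_and] at hk ⊢
      exact hrow k hjj' hk)
  by_cases hinj : Function.Injective m
  · have hsm : StrictMono m := hmono.strictMono_of_injective hinj
    rcases Nat.eq_zero_or_pos N with hN | hN
    · subst hN; simp [Matrix.det_fin_zero]
    by_cases h0 : m ⟨0, hN⟩ = 0
    · -- row 0 is zero
      have : (Matrix.of fun j k : Fin N => if P j k then (1:ℝ) else 0).det = 0 := by
        apply Matrix.det_eq_zero_of_row_eq_zero ⟨0, hN⟩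
        intro k
        simp only [Matrix.of_apply, ite_eq_right_iff]
        intro hP
        rw [key] at hP
        omega
      rw [this]
    · -- m j = j + 1 for all j
      have lb : ∀ t : ℕ, ∀ ht : t < N, t + 1 ≤ m ⟨t, ht⟩ := by
        intro t
        induction t with
        | zero => intro ht; omega
        | succ s ih =>
          intro ht
          have hs : s < N := by omega
          have := hsm (show (⟨s, hs⟩ : Fin N) < ⟨s+1, ht⟩ by simp [Fin.lt_def])
          have := ih hs
          omega
      have ubN : ∀ j : Fin N, m j ≤ N := fun j =>
        le_trans (Finset.card_le_card (Finset.filter_subset _ _)) (by simp)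
      have ub : ∀ d t : ℕ, ∀ ht : t < N, t + d + 1 = N → m ⟨t, ht⟩ ≤ t + 1 := by
        intro d
        induction d with
        | zero => intro t ht hEq; have := ubN ⟨t, ht⟩; omega
        | succ s ih =>
          intro t ht hEq
          have ht1 : t + 1 < N := by omega
          have := hsm (show (⟨t, ht⟩ : Fin N) < ⟨t+1, ht1⟩ by simp [Fin.lt_def])
          have := ih (t+1) ht1 (by omega)
          omega
      have hval : ∀ j : Fin N, m j = (j : ℕ) + 1 := by
        intro j
        have h1 := lb j.1 j.2
        have h2 := ub (N - 1 - j.1) j.1 j.2 (by omega)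
        simp only [Fin.eta] at h1 h2
        omega
      have htri : (Matrix.of fun j k : Fin N => if P j k then (1:ℝ) else 0).BlockTriangular
          OrderDual.toDual := by
        intro j k hjk
        simp only [OrderDual.toDual_lt_toDual] at hjk
        simp only [Matrix.of_apply, ite_eq_right_iff]
        intro hP
        rw [key, hval] at hP
        exact absurd (Fin.lt_def.mp hjk) (by omega)
      rw [Matrix.det_of_lowerTriangular _ htri]
      apply Finset.prod_nonneg
      intro j _
      simp only [Matrix.of_apply]
      positivity
  · -- two equal rows
    simp only [Function.Injective, not_forall] at hinj
    obtain ⟨j, j', hjj', hne⟩ := hinj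
    have : (Matrix.of fun j k : Fin N => if P j k then (1:ℝ) else 0).det = 0 := by
      apply Matrix.det_zero_of_row_eq hne
      funext k
      simp only [Matrix.of_apply]
      congr 1
      rw [eq_iff_iff, key, key, hjj']
    rw [this]

/-- The one-sided exponential `g₁(x) = |a| e^{-ax} χ_{[0,∞)}(sign(a)·x)` is a totally
positive function: all collocation determinants `det (g₁(x_j - y_k))` with
`x₁ < … < x_N`, `y₁ < … < y_N` are nonnegative. -/
theorem one_sided_exponential_totally_positive
    (a : ℝ) (ha : a ≠ 0)
    (g₁ : ℝ → ℝ)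
    (hg₁ : ∀ x : ℝ, g₁ x =
      |a| * Real.exp (-a * x) *
        Set.indicator (Set.Ici (0:ℝ)) (fun _ => (1:ℝ)) (Real.sign a * x))
    (N : ℕ) (x y : Fin N → ℝ) (hx : StrictMono x) (hy : StrictMono y) :
    0 ≤ (Matrix.of fun j k : Fin N => g₁ (x j - y k)).det := by
  rcases lt_or_gt_of_ne ha with hneg | hpos
  · -- a < 0 : indicator condition is x j ≤ y k
    have hsgn : Real.sign a = -1 := Real.sign_of_neg hneg
    have habs : |a| = -a := abs_of_neg hneg
    have hMeq : (Matrix.of fun j k : Fin N => g₁ (x j - y k)) =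
        Matrix.of fun j k : Fin N =>
          ((-a) * Real.exp (-a * x j)) *
            ((Real.exp (a * y k)) * (if x j ≤ y k then (1:ℝ) else 0)) := by
      ext j k
      rw [Matrix.of_apply, Matrix.of_apply, hg₁, hsgn, habs, Set.indicator_apply]
      have hmem : (-1 : ℝ) * (x j - y k) ∈ Set.Ici (0:ℝ) ↔ x j ≤ y k := by
        rw [Set.mem_Ici]; constructor <;> intro h <;> linarith
      by_cases hc : x j ≤ y k
      · rw [if_pos (hmem.mpr hc), if_pos hc,
          show -a * (x j - y k) = -a * x j + a * y k by ring, Real.exp_add]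
        ring
      · rw [if_neg (fun h => hc (hmem.mp h)), if_neg hc]
        ring
    rw [hMeq]
    have h1 : (Matrix.of fun j k : Fin N =>
        ((-a) * Real.exp (-a * x j)) *
          ((Real.exp (a * y k)) * (if x j ≤ y k then (1:ℝ) else 0))).det =
        (∏ j, (-a) * Real.exp (-a * x j)) *
          (Matrix.of fun j k : Fin N =>
            (Real.exp (a * y k)) * (if x j ≤ y k then (1:ℝ) else 0)).det :=
      Matrix.det_mul_column _ _
    have h2 : (Matrix.of fun j k : Fin N =>
        (Real.exp (a * y k)) * (if x j ≤ y k then (1:ℝ) else 0)).det =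
        (∏ k, Real.exp (a * y k)) *
          (Matrix.of fun j k : Fin N => (if x j ≤ y k then (1:ℝ) else 0)).det :=
      Matrix.det_mul_row _ _
    rw [h1, h2]
    have hT : 0 ≤ (Matrix.of fun j k : Fin N => (if x j ≤ y k then (1:ℝ) else 0)).det := by
      rw [← Matrix.det_transpose]
      exact staircase_det_nonneg (fun k j => x j ≤ y k)
        (fun k {j j'} hjj' h => le_trans (hx.monotone hjj') h)
        (fun {k k'} j hkk' h => le_trans h (hy.monotone hkk'))
    have hc : 0 ≤ ∏ j, (-a) * Real.exp (-a * x j) :=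
      Finset.prod_nonneg fun j _ => mul_nonneg (by linarith) (Real.exp_pos _).le
    have hd : 0 ≤ ∏ k, Real.exp (a * y k) :=
      Finset.prod_nonneg fun k _ => (Real.exp_pos _).le
    exact mul_nonneg hc (mul_nonneg hd hT)
  · -- a > 0 : indicator condition is y k ≤ x j
    have hsgn : Real.sign a = 1 := Real.sign_of_pos hpos
    have habs : |a| = a := abs_of_pos hpos
    have hMeq : (Matrix.of fun j k : Fin N => g₁ (x j - y k)) =
        Matrix.of fun j k : Fin N =>
          (a * Real.exp (-a * x j)) *
            ((Real.exp (a * y k)) * (if y k ≤ x j then (1:ℝ) else 0)) := by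
      ext j k
      rw [Matrix.of_apply, Matrix.of_apply, hg₁, hsgn, habs, Set.indicator_apply]
      have hmem : (1 : ℝ) * (x j - y k) ∈ Set.Ici (0:ℝ) ↔ y k ≤ x j := by
        rw [Set.mem_Ici]; constructor <;> intro h <;> linarith
      by_cases hc : y k ≤ x j
      · rw [if_pos (hmem.mpr hc), if_pos hc,
          show -a * (x j - y k) = -a * x j + a * y k by ring, Real.exp_add]
        ring
      · rw [if_neg (fun h => hc (hmem.mp h)), if_neg hc]
        ring
    rw [hMeq]
    have h1 : (Matrix.of fun j k : Fin N =>
        (a * Real.exp (-a * x j)) *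
          ((Real.exp (a * y k)) * (if y k ≤ x j then (1:ℝ) else 0))).det =
        (∏ j, a * Real.exp (-a * x j)) *
          (Matrix.of fun j k : Fin N =>
            (Real.exp (a * y k)) * (if y k ≤ x j then (1:ℝ) else 0)).det :=
      Matrix.det_mul_column _ _
    have h2 : (Matrix.of fun j k : Fin N =>
        (Real.exp (a * y k)) * (if y k ≤ x j then (1:ℝ) else 0)).det =
        (∏ k, Real.exp (a * y k)) *
          (Matrix.of fun j k : Fin N => (if y k ≤ x j then (1:ℝ) else 0)).det :=
      Matrix.det_mul_row _ _
    rw [h1, h2]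
    have hT : 0 ≤ (Matrix.of fun j k : Fin N => (if y k ≤ x j then (1:ℝ) else 0)).det :=
      staircase_det_nonneg (fun j k => y k ≤ x j)
        (fun j {k k'} hkk' h => le_trans (hy.monotone hkk') h)
        (fun {j j'} k hjj' h => le_trans h (hx.monotone hjj'))
    have hc : 0 ≤ ∏ j, a * Real.exp (-a * x j) :=
      Finset.prod_nonneg fun j _ => by positivity
    have hd : 0 ≤ ∏ k, Real.exp (a * y k) :=
      Finset.prod_nonneg fun k _ => (Real.exp_pos _).le
    exact mul_nonneg hc (mul_nonneg hd hT)
end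

section
/- Let D ⊂ ℂ be a domain, k ∈ ℕ, and (f_n) a sequence of holomorphic functions on D converging locally uniformly to f, such that each f_n has at most k zeros in D (counted as distinct points). Then either f is identically zero on D, or f has at most k zeros in D. -/
open Filter Metric Set

/-- One-point Hurwitz: if `f z₀ = 0` and `f ≠ 0` on the sphere of radius `r`
around `z₀`, then eventually `fn n` has a zero in the closed ball. -/
lemma hurwitz_one_zero
    (D : Set ℂ) (hD : IsOpen D)
    (f : ℂ → ℂ) (fn : ℕ → ℂ → ℂ)
    (hfn : ∀ n, DifferentiableOn ℂ (fn n) D)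
    (hconv : TendstoLocallyUniformlyOn fn f atTop D)
    (z₀ : ℂ) (r : ℝ) (hr : 0 < r) (hball : closedBall z₀ r ⊆ D)
    (hf0 : f z₀ = 0) (hsph : ∀ z ∈ sphere z₀ r, f z ≠ 0) :
    ∀ᶠ n in atTop, ∃ w ∈ closedBall z₀ r, fn n w = 0 := by
  have hfd : DifferentiableOn ℂ f D :=
    hconv.differentiableOn (Eventually.of_forall hfn) hD
  -- minimum of ‖f‖ on the sphere
  have hcs : IsCompact (sphere z₀ r) := isCompact_sphere z₀ r
  have hsne : (sphere z₀ r).Nonempty := NormedSpace.sphere_nonempty.2 hr.le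
  have hfc : ContinuousOn (fun z => ‖f z‖) (sphere z₀ r) :=
    (hfd.continuousOn.mono (fun z hz => hball (sphere_subset_closedBall hz))).norm
  obtain ⟨x, hx, hxm⟩ := hcs.exists_isMinOn hsne hfc
  set m := ‖f x‖ with hm
  have hmpos : 0 < m := norm_pos_iff.2 (hsph x hx)
  -- uniform convergence on the closed ball
  have hUnif : TendstoUniformlyOn fn f atTop (closedBall z₀ r) := by
    have := (tendstoLocallyUniformlyOn_iff_forall_isCompact hD).1 hconv
    exact this _ hball (isCompact_closedBall z₀ r)
  have hev : ∀ᶠ n in atTop, ∀ z ∈ closedBall z₀ r, dist (f z) (fn n z) < m / 2 :=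
    (Metric.tendstoUniformlyOn_iff.1 hUnif) (m / 2) (by positivity)
  filter_upwards [hev] with n hn
  by_contra hno
  push_neg at hno
  -- fn n is nonvanishing on the closed ball; apply max principle to its inverse
  have hfnz : ∀ z ∈ closedBall z₀ r, fn n z ≠ 0 := hno
  have hsubD : closedBall z₀ r ⊆ D := hball
  have hdiff : DiffContOnCl ℂ (fun z => (fn n z)⁻¹) (ball z₀ r) := by
    constructor
    · exact (((hfn n).mono (ball_subset_closedBall.trans hsubD)).inv
        (fun z hz => hfnz z (ball_subset_closedBall hz)))
    · rw [closure_ball z₀ hr.ne']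
      exact (((hfn n).continuousOn.mono hsubD)).inv₀ hfnz
  have hbound : ∀ z ∈ frontier (ball z₀ r), ‖(fn n z)⁻¹‖ ≤ 2 / m := by
    rw [frontier_ball z₀ hr.ne']
    intro z hz
    have h1 : m ≤ ‖f z‖ := hxm hz
    have h2 : dist (f z) (fn n z) < m / 2 := hn z (sphere_subset_closedBall hz)
    have h3 : m / 2 ≤ ‖fn n z‖ := by
      have := norm_sub_norm_le (f z) (fn n z)
      rw [← dist_eq_norm] at this
      linarith
    rw [norm_inv]
    calc ‖fn n z‖⁻¹ ≤ (m / 2)⁻¹ := inv_anti₀ (by positivity) h3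
      _ = 2 / m := by rw [inv_div]
  have hmem : z₀ ∈ closure (ball z₀ r) := by
    rw [closure_ball z₀ hr.ne']
    exact mem_closedBall_self hr.le
  have hmax : ‖(fn n z₀)⁻¹‖ ≤ 2 / m :=
    Complex.norm_le_of_forall_mem_frontier_norm_le isBounded_ball hdiff hbound hmem
  -- but fn n z₀ is small
  have hz₀ : z₀ ∈ closedBall z₀ r := mem_closedBall_self hr.le
  have hsmall : ‖fn n z₀‖ < m / 2 := by
    have := hn z₀ hz₀
    rw [hf0, dist_eq_norm, zero_sub, norm_neg] at this
    exact this
  have hpos : 0 < ‖fn n z₀‖ := norm_pos_iff.2 (hfnz z₀ hz₀)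
  rw [norm_inv] at hmax
  have hfin : m / 2 ≤ ‖fn n z₀‖ := by
    have h := mul_le_mul_of_nonneg_left hmax hpos.le
    rw [mul_inv_cancel₀ hpos.ne'] at h
    have h' := mul_le_mul_of_nonneg_left h (show (0:ℝ) ≤ m / 2 by positivity)
    calc m / 2 = m / 2 * 1 := by ring
      _ ≤ m / 2 * (‖fn n z₀‖ * (2 / m)) := h'
      _ = ‖fn n z₀‖ := by field_simp
  linarith

/-- Hurwitz's theorem: if holomorphic functions `f_n` on a domain `D` converge
locally uniformly to `f` and each `f_n` has at most `k` zeros in `D`, then either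
`f ≡ 0` on `D` or `f` has at most `k` zeros in `D`. -/
theorem hurwitz_at_most_k_zeros
    (D : Set ℂ) (hD : IsOpen D) (hDconn : IsPreconnected D) (hDne : D.Nonempty)
    (k : ℕ) (f : ℂ → ℂ) (fn : ℕ → ℂ → ℂ)
    (hfn : ∀ n, DifferentiableOn ℂ (fn n) D)
    (hconv : TendstoLocallyUniformlyOn fn f atTop D)
    (hzeros : ∀ n, ∃ S : Finset ℂ, S.card ≤ k ∧ ∀ z ∈ D, fn n z = 0 → z ∈ S) :
    (∀ z ∈ D, f z = 0) ∨ ∃ S : Finset ℂ, S.card ≤ k ∧ ∀ z ∈ D, f z = 0 → z ∈ S := by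
  by_contra hcon
  push_neg at hcon
  obtain ⟨hne, hbig⟩ := hcon
  have hfd : DifferentiableOn ℂ f D :=
    hconv.differentiableOn (Eventually.of_forall hfn) hD
  have hfa : AnalyticOnNhd ℂ f D := hfd.analyticOnNhd hD
  set Z : Set ℂ := {z ∈ D | f z = 0} with hZ
  -- extract k+1 distinct zeros
  obtain ⟨T, hTZ, hTcard⟩ : ∃ T : Finset ℂ, ↑T ⊆ Z ∧ T.card = k + 1 := by
    by_cases hfin : Z.Finite
    · have hsub : ∀ z ∈ D, f z = 0 → z ∈ hfin.toFinset := by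
        intro z hz hfz; simp [hZ, hz, hfz]
      have : ¬ hfin.toFinset.card ≤ k := fun h => by
        obtain ⟨z, hzD, hzf, hznot⟩ := hbig hfin.toFinset h
        exact hznot (hsub z hzD hzf)
      obtain ⟨t, ht, htc⟩ := Finset.exists_subset_card_eq (Nat.succ_le_of_lt (not_le.1 this))
      exact ⟨t, fun z hz => by simpa using hfin.mem_toFinset.1 (ht hz), htc⟩
    · obtain ⟨t, ht, htc⟩ := Set.Infinite.exists_subset_card_eq hfin (k + 1)
      exact ⟨t, ht, htc⟩
  -- a uniform lower bound on distances between the zeros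
  set δ : ℝ := if h : T.offDiag.Nonempty then T.offDiag.inf' h (fun p => dist p.1 p.2) else 1
    with hδdef
  have hδpos : 0 < δ := by
    rw [hδdef]
    split_ifs with h
    · apply (Finset.lt_inf'_iff _).2
      rintro ⟨a, b⟩ hab
      rw [Finset.mem_offDiag] at hab
      exact dist_pos.2 hab.2.2
    · norm_num
  have hδle : ∀ z ∈ T, ∀ z' ∈ T, z ≠ z' → δ ≤ dist z z' := by
    intro z hz z' hz' hne'
    have hmem : (z, z') ∈ T.offDiag := Finset.mem_offDiag.2 ⟨hz, hz', hne'⟩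
    rw [hδdef, dif_pos ⟨_, hmem⟩]
    exact Finset.inf'_le _ hmem
  -- choose radii
  have hradius : ∀ z ∈ T, ∃ r : ℝ, 0 < r ∧ r < δ / 2 ∧ closedBall z r ⊆ D ∧
      ∀ w ∈ sphere z r, f w ≠ 0 := by
    intro z hz
    have hzZ : z ∈ Z := hTZ hz
    have hzD : z ∈ D := hzZ.1
    have hz0 : f z = 0 := hzZ.2
    -- isolated zero
    have hiso : {w | f w ≠ 0} ∈ nhdsWithin z {z}ᶜ := by
      rcases (hfa z hzD).eventually_eq_zero_or_eventually_ne_zero with h | h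
      · exfalso
        have := hfa.eqOn_zero_of_preconnected_of_eventuallyEq_zero hDconn hzD h
        obtain ⟨w, hwD, hwf⟩ := hne
        exact hwf (this hwD)
      · exact h
    obtain ⟨ρ, hρpos, hρ⟩ := Metric.mem_nhdsWithin_iff.1 hiso
    obtain ⟨ρ', hρ'pos, hρ'⟩ := Metric.nhds_basis_closedBall.mem_iff.1 (hD.mem_nhds hzD)
    refine ⟨min (min (ρ / 2) ρ') (δ / 4), by positivity, ?_, ?_, ?_⟩
    · calc min (min (ρ / 2) ρ') (δ / 4) ≤ δ / 4 := min_le_right _ _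
        _ < δ / 2 := by linarith
    · refine (closedBall_subset_closedBall ?_).trans hρ'
      exact (min_le_left _ _).trans (min_le_right _ _)
    · intro w hw
      have hdw : dist w z = min (min (ρ / 2) ρ') (δ / 4) := mem_sphere.1 hw
      apply hρ
      constructor
      · rw [Metric.mem_ball, hdw]
        calc min (min (ρ / 2) ρ') (δ / 4) ≤ ρ / 2 :=
              (min_le_left _ _).trans (min_le_left _ _)
          _ < ρ := by linarith
      · intro hwz
        rw [Set.mem_singleton_iff] at hwz
        subst hwz
        rw [dist_self] at hdw
        have : (0:ℝ) < min (min (ρ / 2) ρ') (δ / 4) := by positivity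
        linarith
  choose! r hrpos hrδ hrD hrsph using hradius
  -- eventually each fn has a zero near each point of T
  have hev : ∀ᶠ n in atTop, ∀ z ∈ T, ∃ w ∈ closedBall z (r z), fn n w = 0 := by
    rw [Filter.eventually_all_finset]
    intro z hz
    exact hurwitz_one_zero D hD f fn hfn hconv z (r z) (hrpos z hz) (hrD z hz)
      ((hTZ hz).2) (hrsph z hz)
  obtain ⟨N, hN⟩ := hev.exists
  obtain ⟨S, hScard, hSmem⟩ := hzeros N
  choose! w hwball hwzero using hN
  -- the zeros w z are in S and pairwise distinct
  have hwS : ∀ z ∈ T, w z ∈ S := fun z hz =>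
    hSmem _ (hrD z hz (hwball z hz)) (hwzero z hz)
  have hinj : Set.InjOn w ↑T := by
    intro a ha b hb hab
    by_contra hne'
    have h1 : dist a (w a) ≤ r a := mem_closedBall'.1 (hwball a ha)
    have h2 : dist (w b) b ≤ r b := mem_closedBall.1 (hwball b hb)
    have : dist a b ≤ r a + r b := by
      calc dist a b ≤ dist a (w a) + dist (w b) b := by
            rw [hab]; exact dist_triangle _ _ _
        _ ≤ r a + r b := add_le_add h1 h2
    have hδab := hδle a ha b hb hne'
    have := hrδ a ha
    have := hrδ b hb
    linarith
  have hcard : T.card ≤ S.card :=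
    Finset.card_le_card_of_injOn w (fun z hz => hwS z hz) hinj
  omega
end

section
/- Let h : ℝ → ℝ be continuous with h(x+1) = -h(x) for all x, and suppose there exists a point x₀ where h attains its maximum, and points x₀ < z₁ < z₂ < z₃ < x₀ + 1 with h(z₁) < h(z₂) and h(z₃) < h(z₂) (i.e., h is not monotone on [x₀, x₀+1)). Then there exists c ∈ ℝ such that the function h + c has at least four zeros in the interval [x₀, x₀ + 2). -/
/-- Let `h : ℝ → ℝ` be continuous with `h(x+1) = -h(x)`, attaining its maximum at
`x₀`, and not monotone on `[x₀, x₀+1)` in the sense that there are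
`x₀ < z₁ < z₂ < z₃ < x₀+1` with `h(z₁) < h(z₂)` and `h(z₃) < h(z₂)`.  Then some
level set `{h = -c}` contains at least four points in `[x₀, x₀+2)`. -/
theorem antiperiodic_not_monotone_four_zeros
    (h : ℝ → ℝ) (hcont : Continuous h)
    (hanti : ∀ x : ℝ, h (x + 1) = -h x)
    (x₀ : ℝ) (hmax : ∀ x : ℝ, h x ≤ h x₀)
    (z₁ z₂ z₃ : ℝ)
    (hz : x₀ < z₁ ∧ z₁ < z₂ ∧ z₂ < z₃ ∧ z₃ < x₀ + 1)
    (h12 : h z₁ < h z₂) (h32 : h z₃ < h z₂) :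
    ∃ c : ℝ, ∃ t : Fin 4 → ℝ, StrictMono t ∧
      (∀ i, t i ∈ Set.Ico x₀ (x₀ + 2)) ∧ ∀ i, h (t i) + c = 0 := by
  obtain ⟨hx1, h12', h23', h3x⟩ := hz
  set v : ℝ := (max (h z₁) (h z₃) + h z₂) / 2 with hv
  have hmaxlt : max (h z₁) (h z₃) < h z₂ := max_lt h12 h32
  have hv1 : h z₁ < v := by
    have := le_max_left (h z₁) (h z₃); simp only [hv]; linarith
  have hv3 : h z₃ < v := by
    have := le_max_right (h z₁) (h z₃); simp only [hv]; linarith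
  have hv2 : v < h z₂ := by simp only [hv]; linarith
  have hvM : v < h x₀ := lt_of_lt_of_le hv2 (hmax z₂)
  have hmin : ∀ x, -h x₀ ≤ h x := by
    intro x
    have := hmax (x + 1)
    rw [hanti x] at this
    linarith
  have hvm : -h x₀ < v := lt_of_le_of_lt (hmin z₃) hv3
  -- t₁ ∈ (x₀, z₁)
  obtain ⟨t₁, ht₁m, ht₁⟩ := intermediate_value_Ioo' (le_of_lt hx1) hcont.continuousOn
    (show v ∈ Set.Ioo (h z₁) (h x₀) from ⟨hv1, hvM⟩)
  obtain ⟨t₂, ht₂m, ht₂⟩ := intermediate_value_Ioo (le_of_lt h12') hcont.continuousOn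
    (show v ∈ Set.Ioo (h z₁) (h z₂) from ⟨hv1, hv2⟩)
  obtain ⟨t₃, ht₃m, ht₃⟩ := intermediate_value_Ioo' (le_of_lt h23') hcont.continuousOn
    (show v ∈ Set.Ioo (h z₃) (h z₂) from ⟨hv3, hv2⟩)
  have hx01 : h (x₀ + 1) = -h x₀ := hanti x₀
  obtain ⟨s, hsm, hs⟩ := intermediate_value_Ioo' (by linarith : x₀ ≤ x₀ + 1)
    hcont.continuousOn
    (show -v ∈ Set.Ioo (h (x₀ + 1)) (h x₀) by
      rw [hx01]; constructor <;> linarith)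
  refine ⟨-v, ![t₁, t₂, t₃, s + 1], ?_, ?_, ?_⟩
  · have h4 : h (s + 1) = v := by rw [hanti s, hs]; ring
    intro i j hij
    fin_cases i <;> fin_cases j <;>
      simp_all [Set.mem_Ioo] <;>
      first
      | linarith [ht₁m.1, ht₁m.2, ht₂m.1, ht₂m.2, ht₃m.1, ht₃m.2, hsm.1, hsm.2]
      | (exfalso; exact absurd hij (by omega))
  · intro i
    fin_cases i <;>
      rw [Set.mem_Ico] <;>
      refine ⟨?_, ?_⟩ <;>
      simp <;>
      linarith [ht₁m.1, ht₁m.2, ht₂m.1, ht₂m.2, ht₃m.1, ht₃m.2, hsm.1, hsm.2]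
  · intro i
    fin_cases i <;> simp [ht₁, ht₂, ht₃, hanti s, hs] <;> ring_nf <;>
      simp_all
end
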